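/- arXiv:1511.05893 — 9 statements merged into one kernel-verified Lean document; each statement's English description precedes it below -/
import Mathlib

section
/- Let T be a generalized Collatz mapping of relatively prime type (gcd(m_ω, d) = 1 for all ω) and let Φ be a strictly positive linear form for the set of shift vectors S_r (Φ(r_ω) > 0 for every nonzero r_ω). If x ∈ Λ is nonzero with Φ(x) = 0, then the T-trajectory of x is not cyclic; in fact Φ(T^i(x)) > 0 for all sufficiently large i. -/
def toE {e : ℕ} (x : Fin e → ℤ) : Fin e → ℝ := fun i => (x i : ℝ)

def res {e : ℕ} (d : ℕ) (x : Fin e → ℤ) : Fin e → ZMod d := fun i => (x i : ZMod d)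

/-- for a generalized Collatz mapping of relatively prime type and a
strictly positive form `Φ` for the shift vectors, every nonzero lattice point `x`
with `Φ(x) = 0` has `Φ(T^i(x)) > 0` for all large `i`; in particular the
trajectory of `x` is not cyclic. -/
theorem directed_point_not_cyclic
    {e : ℕ} (d : ℕ) (hd : 1 < d)
    (m : (Fin e → ZMod d) → ℤ) (r : (Fin e → ZMod d) → (Fin e → ℤ))
    (hm : ∀ ω, 0 < m ω)
    (hcop : ∀ ω, IsCoprime (m ω) (d : ℤ))
    (T : (Fin e → ℤ) → (Fin e → ℤ))
    (hT : ∀ x : Fin e → ℤ, (d : ℤ) • T x = m (res d x) • x + r (res d x))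
    (Φ : (Fin e → ℝ) →ₗ[ℝ] ℝ)
    (hΦ : ∀ ω, r ω ≠ 0 → 0 < Φ (toE (r ω)))
    (x : Fin e → ℤ) (hx : x ≠ 0) (hx0 : Φ (toE x) = 0) :
    (∃ N : ℕ, ∀ i : ℕ, N ≤ i → 0 < Φ (toE (T^[i] x))) ∧
    (∀ p : ℕ, 0 < p → T^[p] x ≠ x) := by
  haveI : NeZero d := ⟨by omega⟩
  have hdR : (0:ℝ) < (d:ℝ) := by exact_mod_cast Nat.pos_of_ne_zero (by omega)
  have toE_zero : toE (0 : Fin e → ℤ) = 0 := by funext i; simp [toE]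
  have step : ∀ y, (d:ℝ) * Φ (toE (T y)) =
      (m (res d y) : ℝ) * Φ (toE y) + Φ (toE (r (res d y))) := by
    intro y
    have h1 : toE ((d:ℤ) • T y) = (d:ℝ) • toE (T y) := by
      funext i
      simp only [toE, Pi.smul_apply, smul_eq_mul]
      push_cast
      ring
    have h2 : toE (m (res d y) • y + r (res d y)) =
        (m (res d y) : ℝ) • toE y + toE (r (res d y)) := by
      funext i
      simp only [toE, Pi.smul_apply, Pi.add_apply, smul_eq_mul]
      push_cast
      ring
    calc (d:ℝ) * Φ (toE (T y)) = Φ ((d:ℝ) • toE (T y)) := by rw [map_smul, smul_eq_mul]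
      _ = Φ (toE ((d:ℤ) • T y)) := by rw [h1]
      _ = Φ (toE (m (res d y) • y + r (res d y))) := by rw [hT y]
      _ = (m (res d y) : ℝ) * Φ (toE y) + Φ (toE (r (res d y))) := by
          rw [h2, map_add, map_smul, smul_eq_mul]
  have rnonneg : ∀ ω, 0 ≤ Φ (toE (r ω)) := by
    intro ω
    by_cases h : r ω = 0
    · rw [h, toE_zero, map_zero]
    · exact le_of_lt (hΦ ω h)
  have mpos : ∀ ω, (0:ℝ) < (m ω : ℝ) := fun ω => by exact_mod_cast hm ω
  have pos_step : ∀ y, 0 < Φ (toE y) → 0 < Φ (toE (T y)) := by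
    intro y hy
    have h := step y
    nlinarith [rnonneg (res d y), mpos (res d y)]
  have nonneg_iter : ∀ i, 0 ≤ Φ (toE (T^[i] x)) := by
    intro i
    induction i with
    | zero => simp [hx0]
    | succ n ih =>
      rw [Function.iterate_succ_apply']
      have h := step (T^[n] x)
      nlinarith [rnonneg (res d (T^[n] x)), mpos (res d (T^[n] x))]
  have hrzero : ∀ ω : Fin e → ZMod d, r ω = 0 → ω = 0 := by
    intro ω hω
    set y : Fin e → ℤ := fun j => ((ω j).val : ℤ) with hy
    have hres : res d y = ω := by
      funext j
      simp [res, hy]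
    have hTy := hT y
    rw [hres, hω, add_zero] at hTy
    funext i
    have hcomp : (d:ℤ) * T y i = m ω * y i := by
      have := congrFun hTy i
      simpa [Pi.smul_apply, smul_eq_mul] using this
    have hdvd : (d:ℤ) ∣ m ω * y i := ⟨T y i, hcomp.symm⟩
    have hdy : (d:ℤ) ∣ y i := (hcop ω).symm.dvd_of_dvd_mul_left hdvd
    have : ((y i : ℤ) : ZMod d) = 0 := (ZMod.intCast_zmod_eq_zero_iff_dvd _ _).mpr hdy
    rw [← congrFun hres i]
    simpa [res] using this
  have key : ∃ k, 0 < Φ (toE (T^[k] x)) := by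
    by_contra h
    push_neg at h
    have hall : ∀ i, Φ (toE (T^[i] x)) = 0 := fun i => le_antisymm (h i) (nonneg_iter i)
    have hres0 : ∀ i, r (res d (T^[i] x)) = 0 := by
      intro i
      by_contra hne
      have hpos := hΦ _ hne
      have hstep := step (T^[i] x)
      rw [hall i, ← Function.iterate_succ_apply' T i x, hall (i+1)] at hstep
      nlinarith
    have hres0' : ∀ i, res d (T^[i] x) = (0 : Fin e → ZMod d) :=
      fun i => hrzero _ (hres0 i)
    have hr0 : r (0 : Fin e → ZMod d) = 0 := by
      rw [← hres0' 0]; exact hres0 0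
    have hstep0 : ∀ i, (d:ℤ) • T^[i+1] x = m 0 • T^[i] x := by
      intro i
      rw [Function.iterate_succ_apply']
      have h := hT (T^[i] x)
      rw [hres0' i, hr0, add_zero] at h
      exact h
    have hiter : ∀ i, ((d:ℤ)^i) • T^[i] x = ((m 0)^i) • x := by
      intro i
      induction i with
      | zero => simp
      | succ n ih =>
        calc ((d:ℤ)^(n+1)) • T^[n+1] x = ((d:ℤ)^n) • ((d:ℤ) • T^[n+1] x) := by
              rw [pow_succ, mul_smul]
          _ = ((d:ℤ)^n) • (m 0 • T^[n] x) := by rw [hstep0 n]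
          _ = (m 0) • (((d:ℤ)^n) • T^[n] x) := smul_comm _ _ _
          _ = (m 0) • (((m 0)^n) • x) := by rw [ih]
          _ = ((m 0)^(n+1)) • x := by rw [smul_smul, ← pow_succ']
    obtain ⟨j, hj⟩ : ∃ j, x j ≠ 0 := by
      by_contra h'
      push_neg at h'
      exact hx (funext h')
    have hdvd : ∀ i, ((d:ℤ)^i) ∣ x j := by
      intro i
      have hc := congrFun (hiter i) j
      simp only [Pi.smul_apply, smul_eq_mul] at hc
      have hdv : ((d:ℤ)^i) ∣ (m 0)^i * x j := ⟨T^[i] x j, hc.symm⟩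
      exact ((hcop 0).pow).symm.dvd_of_dvd_mul_left hdv
    have hle : ∀ i, ((d:ℤ)^i) ≤ |x j| := fun i =>
      Int.le_of_dvd (abs_pos.mpr hj) ((dvd_abs _ _).mpr (hdvd i))
    have h1 : ((x j).natAbs : ℤ) < (d:ℤ)^((x j).natAbs) := by
      exact_mod_cast Nat.lt_pow_self (n := (x j).natAbs) hd
    have h2 := hle (x j).natAbs
    rw [Int.abs_eq_natAbs] at h2
    omega
  obtain ⟨k, hk⟩ := key
  have hpers : ∀ i, k ≤ i → 0 < Φ (toE (T^[i] x)) := by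
    intro i hi
    induction i, hi using Nat.le_induction with
    | base => exact hk
    | succ n hn ih =>
      rw [Function.iterate_succ_apply']
      exact pos_step _ ih
  refine ⟨⟨k, hpers⟩, ?_⟩
  intro p hp hcyc
  have hge : k ≤ p * k := Nat.le_mul_of_pos_left k hp
  have := hpers (p * k) hge
  rw [Function.iterate_mul, Function.iterate_fixed hcyc] at this
  rw [hx0] at this
  exact lt_irrefl 0 this
end

section
/- Let T be a generalized Collatz mapping of relatively prime type on Λ. If U ⊆ Λ is T-invariant (T(U) ⊆ U) and every point of U is directed (lies on a semipermeable hyperplane, i.e. the kernel of a strictly positive form for S_r), then every T-trajectory starting in U is divergent (not eventually periodic). -/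
lemma toE_zero {e : ℕ} : toE (0 : Fin e → ℤ) = 0 := by
  funext i; simp [toE]

/-- if `T` is a generalized Collatz mapping of relatively prime type
and `U ⊆ Λ` is a `T`-invariant set of directed points (nonzero points lying on a
semipermeable hyperplane, i.e. the kernel of a strictly positive form for the
shift vectors), then every `T`-trajectory starting in `U` is divergent: it is not
eventually periodic. -/
theorem invariant_directed_divergent
    {e : ℕ} (d : ℕ) (hd : 1 < d)
    (m : (Fin e → ZMod d) → ℤ) (r : (Fin e → ZMod d) → (Fin e → ℤ))
    (hm : ∀ ω, 0 < m ω)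
    (hcop : ∀ ω, IsCoprime (m ω) (d : ℤ))
    (T : (Fin e → ℤ) → (Fin e → ℤ))
    (hT : ∀ x : Fin e → ℤ, (d : ℤ) • T x = m (res d x) • x + r (res d x))
    (U : Set (Fin e → ℤ))
    (hUinv : ∀ x ∈ U, T x ∈ U)
    (hUdir : ∀ x ∈ U, x ≠ 0 ∧
      ∃ Φ : (Fin e → ℝ) →ₗ[ℝ] ℝ,
        (∀ ω, r ω ≠ 0 → 0 < Φ (toE (r ω))) ∧ Φ (toE x) = 0) :
    ∀ x ∈ U, ¬ ∃ N p : ℕ, 0 < p ∧ T^[N + p] x = T^[N] x := by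
  intro x hx
  rintro ⟨N, p, hp, hper⟩
  set y := T^[N] x with hy
  have hUiter : ∀ k, T^[k] x ∈ U := by
    intro k; induction k with
    | zero => simpa
    | succ k ih => rw [Function.iterate_succ_apply']; exact hUinv _ ih
  have hyU : y ∈ U := hUiter N
  have hypper : T^[p] y = y := by
    rw [hy, ← Function.iterate_add_apply]
    simpa [Nat.add_comm] using hper
  obtain ⟨hy0, Φ, hΦpos, hΦy⟩ := hUdir y hyU
  have hd0 : (0:ℝ) < (d:ℝ) := by
    have : 0 < d := by omega
    exact_mod_cast this
  -- key equation
  have key : ∀ z : Fin e → ℤ, (d : ℝ) * Φ (toE (T z)) =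
      (m (res d z) : ℝ) * Φ (toE z) + Φ (toE (r (res d z))) := by
    intro z
    have h2 : toE ((d : ℤ) • T z) = toE (m (res d z) • z + r (res d z)) := by
      rw [hT z]
    have h3 : (d : ℝ) • toE (T z) = (m (res d z) : ℝ) • toE z + toE (r (res d z)) := by
      funext i
      have h4 := congrFun h2 i
      simp only [toE, Pi.smul_apply, Pi.add_apply, smul_eq_mul] at h4 ⊢
      exact_mod_cast h4
    calc (d:ℝ) * Φ (toE (T z)) = Φ ((d:ℝ) • toE (T z)) := by
          rw [map_smul]; simp
      _ = Φ ((m (res d z) : ℝ) • toE z + toE (r (res d z))) := by rw [h3]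
      _ = _ := by rw [map_add, map_smul]; simp
  have hrnn : ∀ ω, 0 ≤ Φ (toE (r ω)) := by
    intro ω
    by_cases h : r ω = 0
    · rw [h, toE_zero, map_zero]
    · exact (hΦpos ω h).le
  have hmpos : ∀ ω, (0:ℝ) < (m ω : ℝ) := fun ω => by exact_mod_cast hm ω
  have hnn : ∀ k, 0 ≤ Φ (toE (T^[k] y)) := by
    intro k; induction k with
    | zero => simp [hΦy]
    | succ k ih =>
      rw [Function.iterate_succ_apply']
      have hk := key (T^[k] y)
      nlinarith [hrnn (res d (T^[k] y)), hmpos (res d (T^[k] y)),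
        mul_nonneg (hmpos (res d (T^[k] y))).le ih]
  have hposstep : ∀ k, 0 < Φ (toE (T^[k] y)) → 0 < Φ (toE (T^[k+1] y)) := by
    intro k h
    rw [Function.iterate_succ_apply']
    have hk := key (T^[k] y)
    nlinarith [hrnn (res d (T^[k] y)), hmpos (res d (T^[k] y)),
      mul_pos (hmpos (res d (T^[k] y))) h]
  have hprop : ∀ k j, 0 < Φ (toE (T^[k] y)) → 0 < Φ (toE (T^[k+j] y)) := by
    intro k j hk; induction j with
    | zero => simpa
    | succ j ih =>
      have : k + (j + 1) = (k + j) + 1 := by ring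
      rw [this]
      exact hposstep (k + j) ih
  have hΦzero : ∀ k ≤ p, Φ (toE (T^[k] y)) = 0 := by
    intro k hk
    by_contra h
    have h1 : 0 < Φ (toE (T^[k] y)) := lt_of_le_of_ne (hnn k) (Ne.symm h)
    have h2 := hprop k (p - k) h1
    rw [Nat.add_sub_cancel' hk, hypper, hΦy] at h2
    exact lt_irrefl 0 h2
  have hr0 : ∀ k < p, r (res d (T^[k] y)) = 0 := by
    intro k hk
    by_contra h
    have hpos2 := hΦpos _ h
    have hk1 := key (T^[k] y)
    have e1 := hΦzero k hk.le
    have e2 := hΦzero (k+1) hk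
    rw [Function.iterate_succ_apply'] at e2
    rw [e1, e2] at hk1
    nlinarith
  have hprod : ∀ k ≤ p, ((d:ℤ)^k) • T^[k] y
      = (∏ j ∈ Finset.range k, m (res d (T^[j] y))) • y := by
    intro k hk
    induction k with
    | zero => simp
    | succ k ih =>
      have hk' : k ≤ p := Nat.le_of_succ_le hk
      have ih' := ih hk'
      have hTk : (d:ℤ) • T (T^[k] y) = m (res d (T^[k] y)) • (T^[k] y) := by
        rw [hT, hr0 k hk]; simp
      rw [Function.iterate_succ_apply', pow_succ, mul_comm, mul_smul,
        smul_comm ((d:ℤ)) ((d:ℤ)^k), hTk, smul_comm, ih', smul_smul,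
        Finset.prod_range_succ, mul_comm]
  have hfin := hprod p le_rfl
  rw [hypper] at hfin
  obtain ⟨i, hi⟩ := Function.ne_iff.mp hy0
  have hco := congrFun hfin i
  simp only [Pi.smul_apply, smul_eq_mul] at hco
  have heq : (d:ℤ)^p = ∏ j ∈ Finset.range p, m (res d (T^[j] y)) := by
    exact mul_right_cancel₀ (by simpa using hi) hco
  have hcopM : IsCoprime (∏ j ∈ Finset.range p, m (res d (T^[j] y))) ((d:ℤ)) :=
    IsCoprime.prod_left fun j _ => hcop _
  have hdvd : (d:ℤ) ∣ ∏ j ∈ Finset.range p, m (res d (T^[j] y)) := by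
    rw [← heq]; exact dvd_pow_self _ hp.ne'
  have hunit : IsUnit ((d:ℤ)) := hcopM.isUnit_of_dvd' hdvd dvd_rfl
  rcases Int.isUnit_iff.mp hunit with h | h <;> omega
end

section
/- Let T be a generalized Collatz mapping on a lattice Λ ⊆ E whose shift vectors S_r span E over ℝ. If a hyperplane H ⊆ E is separating for T (i.e., H = ker Φ for some linear form Φ with |m_ω Φ(x)| > |Φ(r_ω)| for all ω and all x ∈ ω with Φ(x) ≠ 0), then H is defined over ℚ, i.e., H is spanned by vectors in Λ ⊗ ℚ. -/
lemma toE_add {e : ℕ} (x y : Fin e → ℤ) : toE (x + y) = toE x + toE y := by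
  funext i; simp [toE]

lemma toE_smul {e : ℕ} (d : ℕ) (y : Fin e → ℤ) : toE (d • y) = (d : ℝ) • toE y := by
  funext i; simp [toE]

/-- if the shift vectors of a generalized Collatz mapping span
`E = ℝ^e` and `Φ` is a separating linear form (`|m_ω Φ(x)| > |Φ(r_ω)|` for all
`x ∈ ω` with `Φ(x) ≠ 0`), then the hyperplane `ker Φ` is defined over ℚ: it is
the kernel of a linear form taking rational values on the lattice. -/
theorem separating_hyperplane_rational
    {e : ℕ} (d : ℕ) (hd : 1 < d)
    (m : (Fin e → ZMod d) → ℤ) (r : (Fin e → ZMod d) → (Fin e → ℤ))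
    (hm : ∀ ω, 0 < m ω)
    (T : (Fin e → ℤ) → (Fin e → ℤ))
    (hT : ∀ x : Fin e → ℤ, (d : ℤ) • T x = m (res d x) • x + r (res d x))
    (hspan : Submodule.span ℝ (Set.range fun ω => toE (r ω)) = ⊤)
    (Φ : (Fin e → ℝ) →ₗ[ℝ] ℝ) (hΦ : Φ ≠ 0)
    (hsep : ∀ x : Fin e → ℤ, Φ (toE x) ≠ 0 →
      |Φ (toE (r (res d x)))| < |(m (res d x) : ℝ) * Φ (toE x)|) :
    ∃ Ψ : (Fin e → ℝ) →ₗ[ℝ] ℝ, Ψ ≠ 0 ∧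
      (∀ x : Fin e → ℤ, ∃ q : ℚ, Ψ (toE x) = (q : ℝ)) ∧
      LinearMap.ker Ψ = LinearMap.ker Φ := by
  haveI : NeZero d := ⟨by omega⟩
  have hd0 : (0 : ℝ) < d := by positivity
  -- the subgroup of values of Φ on the lattice
  set g : (Fin e → ℤ) →+ ℝ :=
    AddMonoidHom.mk' (fun x => Φ (toE x)) (by intro x y; beta_reduce; rw [toE_add, map_add]) with hg
  set S : AddSubgroup ℝ := g.range with hS
  have hmem : ∀ x : Fin e → ℤ, Φ (toE x) ∈ S := fun x => ⟨x, rfl⟩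
  -- if Φ vanishes on all shift vectors then Φ = 0
  have hvanish : (∀ ω, Φ (toE (r ω)) = 0) → False := by
    intro h
    apply hΦ
    rw [← LinearMap.ker_eq_top, eq_top_iff, ← hspan, Submodule.span_le]
    rintro v ⟨ω, rfl⟩
    exact h ω
  rcases S.dense_or_cyclic with hdense | ⟨a, ha⟩
  · -- dense case: impossible
    exfalso
    apply hvanish
    intro ω
    by_contra hne
    -- representative of the class ω
    set x0 : Fin e → ℤ := fun i => (ZMod.cast (ω i) : ℤ) with hx0def
    have hx0 : res d x0 = ω := by
      funext i; simp [res, hx0def, ZMod.intCast_zmod_cast]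
    set c : ℝ := Φ (toE x0) with hc
    set b : ℝ := |Φ (toE (r ω))| / (m ω) with hb
    have hmpos : (0 : ℝ) < m ω := by exact_mod_cast hm ω
    have hbpos : 0 < b := div_pos (abs_pos.mpr hne) hmpos
    -- find a lattice point in the class with small nonzero Φ value
    have hU : Set.Nonempty (Set.Ioo ((-c) / d) ((b - c) / d)) :=
      Set.nonempty_Ioo.mpr ((div_lt_div_iff_of_pos_right hd0).mpr (by linarith))
    obtain ⟨s, hsS, hs1, hs2⟩ := hdense.exists_mem_open isOpen_Ioo hU
    rw [hS, SetLike.mem_coe, AddMonoidHom.mem_range] at hsS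
    obtain ⟨y, hy⟩ := hsS
    have hgy : Φ (toE y) = s := hy
    set x : Fin e → ℤ := x0 + d • y with hxdef
    have hres : res d x = ω := by
      rw [← hx0]
      funext i
      simp only [res, hxdef, Pi.add_apply, Pi.smul_apply, smul_eq_mul]
      push_cast
      simp
    have hval : Φ (toE x) = c + d * s := by
      rw [hxdef, toE_add, map_add, toE_smul, map_smul, hgy, hc, smul_eq_mul]
    have hpos : 0 < Φ (toE x) := by
      rw [hval]
      have := (div_lt_iff₀ hd0).mp hs1
      linarith
    have hlt : Φ (toE x) < b := by
      rw [hval]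
      have := (lt_div_iff₀ hd0).mp hs2
      linarith
    have := hsep x (by positivity)
    rw [hres] at this
    rw [abs_mul, abs_of_pos hmpos, abs_of_pos hpos] at this
    have h2 : (m ω : ℝ) * Φ (toE x) < (m ω : ℝ) * b := by
      exact mul_lt_mul_of_pos_left hlt hmpos
    rw [hb, mul_div_cancel₀ _ (ne_of_gt hmpos)] at h2
    linarith
  · -- cyclic case
    have hmem' : ∀ x : Fin e → ℤ, ∃ n : ℤ, n • a = Φ (toE x) := by
      intro x
      have := hmem x
      rw [ha, AddSubgroup.mem_closure_singleton] at this
      exact this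
    have hane : a ≠ 0 := by
      rintro rfl
      apply hvanish
      intro ω
      obtain ⟨n, hn⟩ := hmem' (r ω)
      simpa using hn.symm
    refine ⟨a⁻¹ • Φ, ?_, ?_, ?_⟩
    · simpa [smul_eq_zero, inv_eq_zero, hane] using hΦ
    · intro x
      obtain ⟨n, hn⟩ := hmem' x
      refine ⟨(n : ℚ), ?_⟩
      simp [← hn, zsmul_eq_mul]
      field_simp
    · exact LinearMap.ker_smul Φ a⁻¹ (inv_ne_zero hane)
end

section
/- Let T be a generalized Collatz mapping on a lattice Λ ⊆ E whose shift vectors span E over ℝ. Then there are only finitely many separating hyperplanes for T. -/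
noncomputable def formOf {e : ℕ} (a : Fin e → ℝ) : (Fin e → ℝ) →ₗ[ℝ] ℝ :=
  ∑ i, (a i) • (LinearMap.proj i)

lemma formOf_apply {e : ℕ} (a x : Fin e → ℝ) : formOf a x = ∑ i, a i * x i := by
  simp [formOf]

lemma eq_formOf {e : ℕ} (Φ : (Fin e → ℝ) →ₗ[ℝ] ℝ) (x : Fin e → ℝ) :
    Φ x = formOf (fun i => Φ (Pi.single i 1)) x := by
  rw [formOf_apply, LinearMap.pi_apply_eq_sum_univ]
  refine Finset.sum_congr rfl fun i _ => ?_
  rw [smul_eq_mul, mul_comm]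
  congr 2
  ext j
  simp [Pi.single_apply, eq_comm]

lemma toE_injective {e : ℕ} : Function.Injective (toE (e := e)) := by
  intro x y h
  funext i
  have := congrFun h i
  simpa [toE] using this

-- the candidate set of integer normal vectors is finite
lemma candidates_finite {e : ℕ} (d : ℕ) (hd : d ≠ 0) (m : (Fin e → ZMod d) → ℤ)
    (r : (Fin e → ZMod d) → (Fin e → ℤ))
    (hspan : Submodule.span ℝ (Set.range fun ω => toE (r ω)) = ⊤) :
    {n : Fin e → ℤ | ∀ ω, |∑ i, n i * r ω i| ≤ d * m ω}.Finite := by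
  classical
  haveI : NeZero d := ⟨hd⟩
  set N := {n : Fin e → ℤ | ∀ ω, |∑ i, n i * r ω i| ≤ d * m ω}
  set L : (Fin e → ℝ) →ₗ[ℝ] ((Fin e → ZMod d) → ℝ) :=
    LinearMap.pi (fun ω => formOf (toE (r ω)))
  have hLinj : Function.Injective L := by
    rw [injective_iff_map_eq_zero]
    intro v hv
    have hker : ∀ ω, formOf v (toE (r ω)) = 0 := by
      intro ω
      have h1 := congrFun hv ω
      simp only [L, LinearMap.pi_apply, Pi.zero_apply] at h1
      rw [formOf_apply] at h1 ⊢
      rw [← h1]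
      exact Finset.sum_congr rfl fun i _ => mul_comm _ _
    have htop : Submodule.span ℝ (Set.range fun ω => toE (r ω)) ≤ LinearMap.ker (formOf v) := by
      rw [Submodule.span_le]
      rintro _ ⟨ω, rfl⟩
      exact hker ω
    rw [hspan, top_le_iff] at htop
    have hvv : formOf v v = 0 := by
      have : v ∈ LinearMap.ker (formOf v) := htop ▸ Submodule.mem_top
      exact this
    rw [formOf_apply] at hvv
    funext i
    have := (Finset.sum_eq_zero_iff_of_nonneg (fun i _ => mul_self_nonneg (v i))).1 hvv i
      (Finset.mem_univ i)
    have := mul_self_eq_zero.1 this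
    simp [this]
  set K : Set ((Fin e → ZMod d) → ℝ) :=
    Set.pi Set.univ (fun ω => (fun k : ℤ => (k : ℝ)) '' Set.Icc (-(d * m ω)) (d * m ω))
  have hK : K.Finite := Set.Finite.pi (fun ω => (Set.finite_Icc _ _).image _)
  have hsub : toE '' N ⊆ L ⁻¹' K := by
    rintro _ ⟨n, hn, rfl⟩
    intro ω _
    refine ⟨∑ i, n i * r ω i, abs_le.1 (hn ω), ?_⟩
    simp only [L, LinearMap.pi_apply, formOf_apply]
    push_cast
    exact Finset.sum_congr rfl fun i _ => mul_comm _ _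
  have : (toE '' N).Finite := ((hK.preimage hLinj.injOn).subset hsub)
  exact Set.Finite.of_finite_image this toE_injective.injOn

/-- if the shift vectors of a generalized Collatz mapping span
`E = ℝ^e`, then there are only finitely many separating hyperplanes, i.e.
kernels of nonzero linear forms `Φ` with `|m_ω Φ(x)| > |Φ(r_ω)|` for all `ω` and
all `x ∈ ω` with `Φ(x) ≠ 0`. -/
theorem separating_hyperplanes_finite
    {e : ℕ} (d : ℕ) (hd : 1 < d)
    (m : (Fin e → ZMod d) → ℤ) (r : (Fin e → ZMod d) → (Fin e → ℤ))
    (hm : ∀ ω, 0 < m ω)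
    (T : (Fin e → ℤ) → (Fin e → ℤ))
    (hT : ∀ x : Fin e → ℤ, (d : ℤ) • T x = m (res d x) • x + r (res d x))
    (hspan : Submodule.span ℝ (Set.range fun ω => toE (r ω)) = ⊤) :
    {H : Submodule ℝ (Fin e → ℝ) |
      ∃ Φ : (Fin e → ℝ) →ₗ[ℝ] ℝ, Φ ≠ 0 ∧ H = LinearMap.ker Φ ∧
        ∀ x : Fin e → ℤ, Φ (toE x) ≠ 0 →
          |Φ (toE (r (res d x)))| < |(m (res d x) : ℝ) * Φ (toE x)|}.Finite := by
  classical
  haveI : NeZero d := ⟨by omega⟩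
  have hd0 : (0:ℝ) < d := by positivity
  refine ((candidates_finite d (by omega) m r hspan).image
    (fun n => LinearMap.ker (formOf (toE n)))).subset ?_
  rintro H ⟨Φ, hΦ0, rfl, hsep⟩
  -- the additive map on the lattice
  set a : Fin e → ℝ := fun i => Φ (Pi.single i 1) with ha
  have hΦa : ∀ x, Φ x = formOf a x := eq_formOf Φ
  have htoEadd : ∀ x y : Fin e → ℤ, toE (x + y) = toE x + toE y := by
    intro x y; funext i; simp [toE]
  set g : (Fin e → ℤ) →+ ℝ := AddMonoidHom.mk' (fun x => Φ (toE x)) (by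
    intro x y
    show Φ (toE (x + y)) = Φ (toE x) + Φ (toE y)
    rw [htoEadd, map_add]) with hg
  set S : AddSubgroup ℝ := g.range with hS
  -- a residue class where Φ(r ω) ≠ 0
  obtain ⟨ω0, hω0⟩ : ∃ ω, Φ (toE (r ω)) ≠ 0 := by
    by_contra h
    push_neg at h
    apply hΦ0
    have htop : Submodule.span ℝ (Set.range fun ω => toE (r ω)) ≤ LinearMap.ker Φ := by
      rw [Submodule.span_le]
      rintro _ ⟨ω, rfl⟩
      exact h ω
    rw [hspan, top_le_iff] at htop
    exact LinearMap.ker_eq_top.1 htop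
  -- representative of class ω
  have hrep : ∀ ω : Fin e → ZMod d, ∃ x : Fin e → ℤ, res d x = ω := by
    intro ω
    refine ⟨fun i => ((ω i).val : ℤ), funext fun i => ?_⟩
    show (((ω i).val : ℤ) : ZMod d) = ω i
    push_cast
    exact ZMod.natCast_rightInverse (ω i)
  obtain ⟨x0, hx0⟩ := hrep ω0
  -- shifting within a residue class
  have hshift : ∀ (x0 y : Fin e → ℤ), res d (fun i => x0 i + d * y i) = res d x0 := by
    intro x0 y
    funext i
    simp only [res]
    push_cast
    simp [ZMod.natCast_self]
  have hgadd : ∀ (x0 y : Fin e → ℤ),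
      Φ (toE (fun i => x0 i + d * y i)) = Φ (toE x0) + d * g y := by
    intro x0 y
    have : toE (fun i => x0 i + d * y i) = toE x0 + (d:ℝ) • toE y := by
      funext i; simp [toE]
    rw [this, map_add, map_smul]
    simp [hg]
  -- S is not dense
  have hnotdense : ¬ Dense (S : Set ℝ) := by
    intro hdense
    set ε : ℝ := |Φ (toE (r ω0))| / m ω0 with hε
    have hε0 : 0 < ε := by
      apply div_pos (abs_pos.2 hω0)
      exact_mod_cast hm ω0
    obtain ⟨s, hsS, hsI⟩ : ∃ s ∈ (S : Set ℝ),
        s ∈ Set.Ioo ((-Φ (toE x0))/d) ((-Φ (toE x0) + ε)/d) := by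
      refine hdense.exists_mem_open isOpen_Ioo (Set.nonempty_Ioo.2 ?_)
      rw [div_lt_div_iff₀ hd0 hd0]
      nlinarith
    obtain ⟨y, hy⟩ := hsS
    set x : Fin e → ℤ := fun i => x0 i + d * y i with hx
    have hres : res d x = ω0 := by rw [hx, hshift, hx0]
    have hval : Φ (toE x) = Φ (toE x0) + d * s := by rw [hx, hgadd, hy]
    have hpos : 0 < Φ (toE x) := by
      rw [hval]
      obtain ⟨h1, h2⟩ := hsI
      rw [div_lt_iff₀ hd0] at h1
      nlinarith
    have hlt : Φ (toE x) < ε := by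
      rw [hval]
      obtain ⟨h1, h2⟩ := hsI
      rw [lt_div_iff₀ hd0] at h2
      nlinarith
    have := hsep x (ne_of_gt hpos)
    rw [hres] at this
    have hmabs : |(m ω0 : ℝ) * Φ (toE x)| = (m ω0 : ℝ) * Φ (toE x) := by
      apply abs_of_pos
      apply mul_pos _ hpos
      exact_mod_cast hm ω0
    rw [hmabs] at this
    have hm0 : (0:ℝ) < m ω0 := by exact_mod_cast hm ω0
    have : (m ω0 : ℝ) * Φ (toE x) < |Φ (toE (r ω0))| := by
      calc (m ω0 : ℝ) * Φ (toE x) < (m ω0 : ℝ) * ε := by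
            exact mul_lt_mul_of_pos_left hlt hm0
        _ = |Φ (toE (r ω0))| := by rw [hε]; field_simp
    linarith
  -- hence S is cyclic
  obtain ⟨c, hc⟩ : ∃ c : ℝ, S = AddSubgroup.closure {c} :=
    (AddSubgroup.dense_or_cyclic S).resolve_left hnotdense
  have hc0 : c ≠ 0 := by
    rintro rfl
    have : Φ (toE (r ω0)) ∈ S := ⟨r ω0, rfl⟩
    rw [hc] at this
    obtain ⟨k, hk⟩ := AddSubgroup.mem_closure_singleton.1 this
    simp at hk
    exact hω0 hk.symm
  -- integer coordinates of Φ relative to c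
  have haS : ∀ i, ∃ k : ℤ, (k : ℝ) * c = a i := by
    intro i
    have h1 : toE (fun j => if i = j then 1 else 0) = Pi.single i 1 := by
      funext j
      by_cases h : i = j <;> simp [toE, h, Pi.single_apply]
    have : a i ∈ S := ⟨fun j => if i = j then 1 else 0, by simp [hg]; rw [h1]⟩
    rw [hc] at this
    obtain ⟨k, hk⟩ := AddSubgroup.mem_closure_singleton.1 this
    exact ⟨k, by rw [← hk]; simp [zsmul_eq_mul]⟩
  choose n hn using haS
  -- evaluation on lattice points
  have heval : ∀ x : Fin e → ℤ, Φ (toE x) = ((∑ i, n i * x i : ℤ) : ℝ) * c := by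
    intro x
    rw [hΦa, formOf_apply]
    push_cast
    rw [Finset.sum_mul]
    refine Finset.sum_congr rfl fun i _ => ?_
    rw [← hn i, toE]
    ring
  -- surjectivity of the integer form
  have hsurj : ∀ k : ℤ, ∃ x : Fin e → ℤ, (∑ i, n i * x i) = k := by
    intro k
    have : (k : ℝ) * c ∈ S := by
      rw [hc]
      exact AddSubgroup.mem_closure_singleton.2 ⟨k, by simp [zsmul_eq_mul]⟩
    obtain ⟨x, hx⟩ := this
    refine ⟨x, ?_⟩
    have : Φ (toE x) = (k:ℝ) * c := hx
    rw [heval] at this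
    have := mul_right_cancel₀ hc0 this
    exact_mod_cast this
  -- the bound for each residue class
  have hbound : ∀ ω, |∑ i, n i * r ω i| ≤ d * m ω := by
    intro ω
    obtain ⟨z0, hz0⟩ := hrep ω
    set k : ℤ := ∑ i, n i * z0 i with hk
    set q : ℤ := (k - 1) / d with hq
    set j : ℤ := (k - 1) % d + 1 with hj
    have hdz : (0:ℤ) < d := Int.natCast_pos.mpr (by omega)
    have hj1 : 1 ≤ j := by
      have := Int.emod_nonneg (k - 1) (by omega : (d:ℤ) ≠ 0)
      omega
    have hjd : j ≤ d := by
      have := Int.emod_lt_of_pos (k - 1) hdz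
      omega
    have hkj : k - d * q = j := by
      have h := Int.emod_add_mul_ediv (k - 1) (d : ℤ)
      rw [hj, hq]
      linarith [h]
    obtain ⟨y, hy⟩ := hsurj (-q)
    set x : Fin e → ℤ := fun i => z0 i + d * y i with hx
    have hres : res d x = ω := by rw [hx, hshift, hz0]
    have hipx : (∑ i, n i * x i) = j := by
      rw [hx]
      have : (∑ i, n i * (z0 i + d * y i)) = k + d * (∑ i, n i * y i) := by
        rw [hk, Finset.mul_sum, ← Finset.sum_add_distrib]
        refine Finset.sum_congr rfl fun i _ => by ring
      rw [this, hy, ← hkj]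
      ring
    have hΦx : Φ (toE x) = (j : ℝ) * c := by rw [heval, hipx]
    have hΦx0 : Φ (toE x) ≠ 0 := by
      rw [hΦx]
      apply mul_ne_zero _ hc0
      exact_mod_cast (by omega : j ≠ 0)
    have := hsep x hΦx0
    rw [hres, hΦx, heval (r ω)] at this
    -- |ip * c| < |m * (j * c)|
    rw [abs_mul, abs_mul, abs_mul, ← mul_assoc] at this
    have hcpos : 0 < |c| := abs_pos.2 hc0
    have h2 := (mul_lt_mul_iff_of_pos_right hcpos).1 this
    have hmr : (0:ℝ) < (m ω : ℝ) := by exact_mod_cast hm ω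
    have hjr : (0:ℝ) < (j : ℝ) := by exact_mod_cast (by omega : (0:ℤ) < j)
    rw [abs_of_pos hmr, abs_of_pos hjr] at h2
    have h4 : |∑ i, n i * r ω i| < m ω * j := by exact_mod_cast h2
    have h5 : m ω * j ≤ m ω * d := mul_le_mul_of_nonneg_left hjd (hm ω).le
    rw [mul_comm (d:ℤ) (m ω)]
    exact (h4.trans_le h5).le
  refine ⟨n, hbound, ?_⟩
  -- kernels agree
  ext x
  simp only [LinearMap.mem_ker]
  rw [hΦa, formOf_apply, formOf_apply]
  have hfa : (∑ i, a i * x i) = c * ∑ i, (toE n) i * x i := by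
    rw [Finset.mul_sum]
    refine Finset.sum_congr rfl fun i _ => ?_
    rw [← hn i, toE]
    ring
  rw [hfa]
  constructor
  · intro h
    rw [h, mul_zero]
  · intro h
    rcases mul_eq_zero.1 h with h | h
    · exact absurd h hc0
    · exact h
end

section
/- Let T be a generalized Collatz mapping on Λ ⊆ E, and let Φ₁,…,Φ_ℓ be linear forms on E each of which is either positive for S_r (Φ_i(r_ω) ≥ 0 for all ω) or separating for T. Then the set C = {x ∈ Λ : Φ_i(x) > 0 for all i} is T-invariant. -/
/-- if each of the linear forms `Φ₁, …, Φ_ℓ` is either positive for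
the shift vectors or separating for `T`, then the cone
`C = {x ∈ Λ | Φᵢ(x) > 0 for all i}` is `T`-invariant. -/
theorem positive_cone_invariant
    {e : ℕ} (d : ℕ) (hd : 1 < d)
    (m : (Fin e → ZMod d) → ℤ) (r : (Fin e → ZMod d) → (Fin e → ℤ))
    (hm : ∀ ω, 0 < m ω)
    (T : (Fin e → ℤ) → (Fin e → ℤ))
    (hT : ∀ x : Fin e → ℤ, (d : ℤ) • T x = m (res d x) • x + r (res d x))
    (ℓ : ℕ) (Φ : Fin ℓ → ((Fin e → ℝ) →ₗ[ℝ] ℝ))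
    (hΦ : ∀ i : Fin ℓ,
      (∀ ω, 0 ≤ (Φ i) (toE (r ω))) ∨
      (∀ x : Fin e → ℤ, (Φ i) (toE x) ≠ 0 →
        |(Φ i) (toE (r (res d x)))| < |(m (res d x) : ℝ) * (Φ i) (toE x)|)) :
    ∀ x : Fin e → ℤ, (∀ i : Fin ℓ, 0 < (Φ i) (toE x)) →
      ∀ i : Fin ℓ, 0 < (Φ i) (toE (T x)) := by
  intro x hx i
  set ω := res d x with hω
  have hEe : toE ((d : ℤ) • T x) = (d : ℝ) • toE (T x) := by
    funext j; simp [toE]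
  have hEe2 : toE (m ω • x + r ω) = (m ω : ℝ) • toE x + toE (r ω) := by
    funext j; simp [toE]
  have key : (d : ℝ) * (Φ i) (toE (T x)) =
      (m ω : ℝ) * (Φ i) (toE x) + (Φ i) (toE (r ω)) := by
    have := congrArg (fun v => (Φ i) (toE v)) (hT x)
    rw [← hω] at this
    simp only [hEe, hEe2, map_add, map_smul, smul_eq_mul] at this
    exact this
  have hd0 : (0 : ℝ) < d := by positivity
  have hmx : 0 < (m ω : ℝ) * (Φ i) (toE x) := by
    have := hm ω
    have : (0 : ℝ) < (m ω : ℝ) := by exact_mod_cast this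
    exact mul_pos this (hx i)
  have hsum : 0 < (m ω : ℝ) * (Φ i) (toE x) + (Φ i) (toE (r ω)) := by
    rcases hΦ i with h | h
    · linarith [h ω]
    · have := h x (ne_of_gt (hx i))
      rw [← hω] at this
      rw [abs_of_pos hmx] at this
      nlinarith [neg_abs_le ((Φ i) (toE (r ω)))]
  nlinarith [key]
end

section
/- For the map T : ℤ² → ℤ² from the extension of the Collatz map to ℤ[√2] (T(x,y) = ½(x,y), ½(3x+1,3y), ½(3x,3y+1), ½(9x+3,9y+1) according to parities), every point (x,y) ∈ ℤ² with x > 0 and y < 0 has a divergent T-trajectory, i.e., the sequence (T^k(x,y)) is not eventually periodic. -/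
/-- for the extension of the Collatz map to ℤ[√2] ≅ ℤ², every point
of the open fourth quadrant (`x > 0`, `y < 0`) has a divergent trajectory: the
sequence of iterates is not eventually periodic. -/
theorem fourth_quadrant_divergent
    (T : ℤ × ℤ → ℤ × ℤ)
    (hT1 : ∀ x y : ℤ, Even x → Even y → (2 : ℤ) • T (x, y) = (x, y))
    (hT2 : ∀ x y : ℤ, Odd x → Even y → (2 : ℤ) • T (x, y) = (3 * x + 1, 3 * y))
    (hT3 : ∀ x y : ℤ, Even x → Odd y → (2 : ℤ) • T (x, y) = (3 * x, 3 * y + 1))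
    (hT4 : ∀ x y : ℤ, Odd x → Odd y → (2 : ℤ) • T (x, y) = (9 * x + 3, 9 * y + 1)) :
    ∀ x y : ℤ, 0 < x → y < 0 →
      ¬ ∃ N p : ℕ, 0 < p ∧ T^[N + p] (x, y) = T^[N] (x, y) := by
  intro x y hx hy
  rintro ⟨N, p, hp, hper⟩
  -- one-step affine description with nonnegative shift, in scalar form
  have key : ∀ a b : ℤ, 0 < a → b < 0 →
      ∃ c s1 s2 : ℤ, Odd c ∧ 0 < c ∧ 0 ≤ s1 ∧ 0 ≤ s2 ∧ s2 < c ∧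
        2 * (T (a, b)).1 = c * a + s1 ∧ 2 * (T (a, b)).2 = c * b + s2 := by
    intro a b ha hb
    rcases Int.even_or_odd a with hea | hoa <;> rcases Int.even_or_odd b with heb | hob
    · have h := hT1 a b hea heb
      have e1 := congrArg Prod.fst h
      have e2 := congrArg Prod.snd h
      simp [Prod.smul_fst, Prod.smul_snd, smul_eq_mul] at e1 e2
      exact ⟨1, 0, 0, odd_one, one_pos, le_refl _, le_refl _, one_pos, by omega, by omega⟩
    · have h := hT3 a b hea hob
      have e1 := congrArg Prod.fst h
      have e2 := congrArg Prod.snd h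
      simp [Prod.smul_fst, Prod.smul_snd, smul_eq_mul] at e1 e2
      exact ⟨3, 0, 1, ⟨1, by ring⟩, by norm_num, le_refl _, by norm_num, by norm_num,
        by omega, by omega⟩
    · have h := hT2 a b hoa heb
      have e1 := congrArg Prod.fst h
      have e2 := congrArg Prod.snd h
      simp [Prod.smul_fst, Prod.smul_snd, smul_eq_mul] at e1 e2
      exact ⟨3, 1, 0, ⟨1, by ring⟩, by norm_num, by norm_num, le_refl _, by norm_num,
        by omega, by omega⟩
    · have h := hT4 a b hoa hob
      have e1 := congrArg Prod.fst h
      have e2 := congrArg Prod.snd h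
      simp [Prod.smul_fst, Prod.smul_snd, smul_eq_mul] at e1 e2
      exact ⟨9, 3, 1, ⟨4, by ring⟩, by norm_num, by norm_num, by norm_num, by norm_num,
        by omega, by omega⟩
  -- the open fourth quadrant is invariant along the trajectory
  have quad : ∀ k : ℕ, 0 < (T^[k] (x, y)).1 ∧ (T^[k] (x, y)).2 < 0 := by
    intro k
    induction k with
    | zero => exact ⟨hx, hy⟩
    | succ k ih =>
      obtain ⟨h1, h2⟩ := ih
      obtain ⟨c, s1, s2, hodd, hcpos, hs1, hs2, hs2c, e1, e2⟩ :=
        key (T^[k] (x, y)).1 (T^[k] (x, y)).2 h1 h2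
      rw [Function.iterate_succ_apply']
      have e1' : 2 * (T (T^[k] (x, y))).1 = c * (T^[k] (x, y)).1 + s1 := by
        simpa using e1
      have e2' : 2 * (T (T^[k] (x, y))).2 = c * (T^[k] (x, y)).2 + s2 := by
        simpa using e2
      constructor
      · nlinarith
      · nlinarith
  -- iterating: 2^k • T^[N+k] = c • T^[N] + S with c odd positive, S ≥ 0
  have main : ∀ k : ℕ, ∃ c S1 S2 : ℤ, Odd c ∧ 0 < c ∧ 0 ≤ S1 ∧ 0 ≤ S2 ∧
      2 ^ k * (T^[N + k] (x, y)).1 = c * (T^[N] (x, y)).1 + S1 ∧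
      2 ^ k * (T^[N + k] (x, y)).2 = c * (T^[N] (x, y)).2 + S2 := by
    intro k
    induction k with
    | zero =>
      exact ⟨1, 0, 0, odd_one, one_pos, le_refl _, le_refl _, by simp, by simp⟩
    | succ k ih =>
      obtain ⟨c, S1, S2, hodd, hcpos, hS1, hS2, E1, E2⟩ := ih
      obtain ⟨h1, h2⟩ := quad (N + k)
      obtain ⟨c', s1, s2, hodd', hcpos', hs1, hs2, hs2c, e1, e2⟩ :=
        key (T^[N + k] (x, y)).1 (T^[N + k] (x, y)).2 h1 h2
      have e1' : 2 * (T (T^[N + k] (x, y))).1 = c' * (T^[N + k] (x, y)).1 + s1 := by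
        simpa using e1
      have e2' : 2 * (T (T^[N + k] (x, y))).2 = c' * (T^[N + k] (x, y)).2 + s2 := by
        simpa using e2
      have hit : T^[N + (k + 1)] (x, y) = T (T^[N + k] (x, y)) := by
        rw [show N + (k + 1) = (N + k) + 1 by ring, Function.iterate_succ_apply']
      refine ⟨c' * c, c' * S1 + 2 ^ k * s1, c' * S2 + 2 ^ k * s2,
        hodd'.mul hodd, by positivity, by positivity, by positivity, ?_, ?_⟩
      · rw [hit]
        have : 2 ^ (k + 1) * (T (T^[N + k] (x, y))).1
            = 2 ^ k * (2 * (T (T^[N + k] (x, y))).1) := by ring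
        rw [this, e1']
        nlinarith [E1]
      · rw [hit]
        have : 2 ^ (k + 1) * (T (T^[N + k] (x, y))).2
            = 2 ^ k * (2 * (T (T^[N + k] (x, y))).2) := by ring
        rw [this, e2']
        nlinarith [E2]
  -- conclude
  obtain ⟨c, S1, S2, hodd, hcpos, hS1, hS2, E1, E2⟩ := main p
  obtain ⟨hu1, hu2⟩ := quad N
  rw [hper] at E1 E2
  have h1 : (2 ^ p - c) * (T^[N] (x, y)).1 = S1 := by linarith [E1]
  have h2 : (2 ^ p - c) * (T^[N] (x, y)).2 = S2 := by linarith [E2]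
  have hc : (2 : ℤ) ^ p = c := by nlinarith
  have : Even ((2 : ℤ) ^ p) := by
    rcases Nat.exists_eq_succ_of_ne_zero hp.ne' with ⟨q, rfl⟩
    exact ⟨2 ^ q, by rw [pow_succ]; ring⟩
  rw [hc] at this
  exact ((Int.not_odd_iff_even.mpr this)) hodd
end

section
/- Let T be a generalized Collatz mapping of relatively prime type on Λ. For x, y ∈ Λ and k ≥ 1, one has x ≡ y mod d^kΛ if and only if T^i(x) ≡ T^i(y) mod dΛ for all i = 0,…,k−1. -/
lemma res_eq_iff {e : ℕ} (n : ℕ) (x y : Fin e → ℤ) :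
    res n x = res n y ↔ ∀ i, (n : ℤ) ∣ y i - x i := by
  simp only [res, funext_iff, ZMod.intCast_eq_intCast_iff, Int.modEq_iff_dvd]

lemma step_dvd (d m : ℤ) (hd : d ≠ 0) (hcop : IsCoprime m d) (k : ℕ)
    (a b : ℤ) (h : d * b = m * a) :
    d ^ (k + 1) ∣ a ↔ d ^ k ∣ b := by
  constructor
  · rintro ⟨t, ht⟩
    refine ⟨m * t, ?_⟩
    apply mul_left_cancel₀ hd
    rw [h, ht]; ring
  · rintro ⟨t, ht⟩
    have h2 : d ^ (k + 1) ∣ m * a := ⟨t, by rw [← h, ht]; ring⟩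
    exact (hcop.symm.pow_left).dvd_of_dvd_mul_left h2

/-- for a generalized Collatz mapping of relatively prime type,
`x ≡ y mod d^kΛ` holds if and only if `T^i(x) ≡ T^i(y) mod dΛ` for all
`i = 0, …, k-1`. -/
theorem congruence_iff_residues
    {e : ℕ} (d : ℕ) (hd : 1 < d)
    (m : (Fin e → ZMod d) → ℤ) (r : (Fin e → ZMod d) → (Fin e → ℤ))
    (hm : ∀ ω, 0 < m ω)
    (hcop : ∀ ω, IsCoprime (m ω) (d : ℤ))
    (T : (Fin e → ℤ) → (Fin e → ℤ))
    (hT : ∀ x : Fin e → ℤ, (d : ℤ) • T x = m (res d x) • x + r (res d x))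
    (x y : Fin e → ℤ) (k : ℕ) (hk : 1 ≤ k) :
    res (d ^ k) x = res (d ^ k) y ↔
      ∀ i : ℕ, i < k → res d (T^[i] x) = res d (T^[i] y) := by
  have hd0 : (d : ℤ) ≠ 0 := by positivity
  have hstep : ∀ (x y : Fin e → ℤ) (k : ℕ), res d x = res d y →
      (res (d ^ (k + 1)) x = res (d ^ (k + 1)) y ↔
        res (d ^ k) (T x) = res (d ^ k) (T y)) := by
    intro x y k hxy
    rw [res_eq_iff, res_eq_iff]
    push_cast
    refine forall_congr' fun i => ?_
    have hT1 := congrFun (hT x) i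
    have hT2 := congrFun (hT y) i
    simp only [Pi.smul_apply, smul_eq_mul, Pi.add_apply] at hT1 hT2
    rw [hxy] at hT1
    have hrel : (d : ℤ) * (T y i - T x i) = m (res d y) * (y i - x i) := by
      rw [mul_sub, hT1, hT2]; ring
    exact step_dvd (d : ℤ) (m (res d y)) hd0 (hcop _) k _ _ hrel
  induction k, hk using Nat.le_induction generalizing x y with
  | base =>
    rw [res_eq_iff]
    push_cast
    simp only [pow_one]
    constructor
    · intro h i hi
      obtain rfl : i = 0 := Nat.lt_one_iff.mp hi
      simp only [Function.iterate_zero_apply]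
      exact (res_eq_iff d x y).mpr h
    · intro h
      exact (res_eq_iff d x y).mp (by simpa using h 0 one_pos)
  | succ k hk1 IH =>
    constructor
    · intro h
      have hxy : res d x = res d y := by
        rw [res_eq_iff] at h ⊢
        push_cast at h
        exact fun i => dvd_trans (dvd_pow_self (d : ℤ) (Nat.succ_ne_zero k)) (h i)
      have h3 := (IH (T x) (T y)).mp ((hstep x y k hxy).mp h)
      intro i hi
      cases i with
      | zero => simpa using hxy
      | succ j =>
        rw [Function.iterate_succ_apply, Function.iterate_succ_apply]
        exact h3 j (Nat.lt_of_succ_lt_succ hi)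
    · intro h
      have hxy : res d x = res d y := by simpa using h 0 (Nat.succ_pos k)
      refine (hstep x y k hxy).mpr ((IH (T x) (T y)).mpr fun j hj => ?_)
      have := h (j + 1) (Nat.succ_lt_succ hj)
      rwa [Function.iterate_succ_apply, Function.iterate_succ_apply] at this
end

section
/- Let T be a generalized Collatz mapping on a lattice Λ ⊆ E equipped with a norm, and let x ∈ Λ with trajectory residues ω(x,i) satisfying ∏_{i=0}^{k-1} m_{ω(x,i)} < d^k. Set R = max_ω ‖r_ω‖, M = max_ω m_ω (assume M > d), λ_k = d^k − ∏_{i=0}^{k-1} m_{ω(x,i)}. Then every y ≡ x mod d^kΛ with ‖y‖ > R(M^k − d^k)/(λ_k(M−d)) satisfies ‖T^k(y)‖ < ‖y‖. -/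
/-- the stopping-time estimate. Suppose the trajectory residues of
`x` satisfy `∏_{i<k} m_{ω(x,i)} < d^k`, let `R` bound the norms of the shift
vectors, `M` bound the multipliers (with `M > d`), and
`λ_k = d^k - ∏_{i<k} m_{ω(x,i)}`. Then every `y ≡ x mod d^kΛ` with
`‖y‖ > R(M^k - d^k)/(λ_k (M - d))` satisfies `‖T^k(y)‖ < ‖y‖`. -/
theorem stopping_time_estimate
    {e : ℕ} (d : ℕ) (hd : 1 < d)
    (m : (Fin e → ZMod d) → ℤ) (r : (Fin e → ZMod d) → (Fin e → ℤ))
    (hm : ∀ ω, 0 < m ω)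
    (hcop : ∀ ω, IsCoprime (m ω) (d : ℤ))
    (T : (Fin e → ℤ) → (Fin e → ℤ))
    (hT : ∀ x : Fin e → ℤ, (d : ℤ) • T x = m (res d x) • x + r (res d x))
    -- a norm on E = ℝ^e
    (f : (Fin e → ℝ) → ℝ)
    (hf_add : ∀ v w, f (v + w) ≤ f v + f w)
    (hf_smul : ∀ (c : ℝ) v, f (c • v) = |c| * f v)
    (hf_def : ∀ v, f v = 0 → v = 0)
    (R : ℝ) (hR : ∀ ω, f (toE (r ω)) ≤ R)
    (M : ℤ) (hM : ∀ ω, m ω ≤ M) (hMd : (d : ℤ) < M)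
    (x : Fin e → ℤ) (k : ℕ)
    (hprod : ∏ i ∈ Finset.range k, m (res d (T^[i] x)) < (d : ℤ) ^ k) :
    ∀ y : Fin e → ℤ, res (d ^ k) y = res (d ^ k) x →
      R * ((M : ℝ) ^ k - (d : ℝ) ^ k) /
          ((((d : ℤ) ^ k - ∏ i ∈ Finset.range k, m (res d (T^[i] x)) : ℤ) : ℝ) *
            ((M : ℝ) - (d : ℝ))) < f (toE y) →
      f (toE (T^[k] y)) < f (toE y) := by
  intro y hres hy
  have hd0 : (0:ℤ) < d := by exact_mod_cast Nat.lt_of_lt_of_le Nat.zero_lt_one hd.le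
  have hdne : ((d:ℤ)) ≠ 0 := ne_of_gt hd0
  -- basic properties of f
  have hf0 : f 0 = 0 := by
    have h := hf_smul 0 0
    simpa using h
  have hf_nonneg : ∀ v, 0 ≤ f v := by
    intro v
    have h1 : f (v + (-1:ℝ) • v) ≤ f v + f ((-1:ℝ) • v) := hf_add _ _
    have h2 : f ((-1:ℝ) • v) = f v := by rw [hf_smul]; simp
    have h3 : v + (-1:ℝ) • v = (0 : Fin e → ℝ) := by
      funext j; simp
    rw [h3, hf0, h2] at h1
    linarith
  have hf_sum : ∀ (s : Finset ℕ) (g : ℕ → (Fin e → ℝ)),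
      f (∑ i ∈ s, g i) ≤ ∑ i ∈ s, f (g i) := by
    intro s g
    induction s using Finset.induction_on with
    | empty => simp [hf0]
    | insert _ _ hns ih =>
      rw [Finset.sum_insert hns, Finset.sum_insert hns]
      exact le_trans (hf_add _ _) (by linarith)
  have hR0 : 0 ≤ R := le_trans (hf_nonneg _) (hR (fun _ => 0))
  -- residue equality as divisibility
  have res_eq_iff : ∀ (n : ℕ) (a b : Fin e → ℤ),
      res n a = res n b ↔ ∀ j, (n:ℤ) ∣ a j - b j := by
    intro n a b
    constructor
    · intro h j
      have h1 : ((a j : ℤ) : ZMod n) = ((b j : ℤ) : ZMod n) := congrFun h j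
      rw [ZMod.intCast_eq_intCast_iff, Int.modEq_iff_dvd] at h1
      exact dvd_sub_comm.mp h1
    · intro h
      funext j
      show ((a j : ℤ) : ZMod n) = ((b j : ℤ) : ZMod n)
      rw [ZMod.intCast_eq_intCast_iff, Int.modEq_iff_dvd]
      exact dvd_sub_comm.mp (h j)
  -- one step of congruence propagation
  have step : ∀ (n : ℕ) (a b : Fin e → ℤ), (∀ j, (d:ℤ)^(n+1) ∣ a j - b j) →
      res d a = res d b ∧ ∀ j, (d:ℤ)^n ∣ T a j - T b j := by
    intro n a b h
    have hres' : res d a = res d b := by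
      rw [res_eq_iff]
      intro j
      exact dvd_trans (dvd_pow_self (d:ℤ) (Nat.succ_ne_zero n)) (h j)
    refine ⟨hres', fun j => ?_⟩
    have ha := congrFun (hT a) j
    have hb := congrFun (hT b) j
    simp only [Pi.smul_apply, Pi.add_apply, smul_eq_mul] at ha hb
    rw [hres'] at ha
    obtain ⟨c, hc⟩ := h j
    have key : (d:ℤ) * (T a j - T b j) = (d:ℤ) * (m (res d b) * ((d:ℤ)^n * c)) := by
      have : (d:ℤ) * (T a j - T b j) = m (res d b) * (a j - b j) := by
        rw [mul_sub, ha, hb]; ring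
      rw [this, hc]; ring
    have key2 := mul_left_cancel₀ hdne key
    exact ⟨m (res d b) * c, by rw [key2]; ring⟩
  -- iterated congruence
  have hres0 : ∀ j, (d:ℤ)^k ∣ y j - x j := by
    intro j
    have := (res_eq_iff (d^k) y x).mp hres j
    simpa [Nat.cast_pow] using this
  have iter : ∀ i : ℕ, i ≤ k → ∀ j, (d:ℤ)^(k-i) ∣ T^[i] y j - T^[i] x j := by
    intro i
    induction i with
    | zero => intro _ j; simpa using hres0 j
    | succ i ih =>
      intro hik j
      have h1 := ih (by omega)
      have hk : k - i = (k - (i+1)) + 1 := by omega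
      rw [hk] at h1
      have h2 := (step _ _ _ h1).2 j
      simpa [Function.iterate_succ_apply'] using h2
  have hω : ∀ i, i < k → res d (T^[i] y) = res d (T^[i] x) := by
    intro i hik
    have h1 := iter i hik.le
    have hk : k - i = (k - (i+1)) + 1 := by omega
    rw [hk] at h1
    exact (step _ _ _ h1).1
  -- the trajectory formula, componentwise
  have traj : ∀ (n : ℕ) (j : Fin e),
      (d:ℤ)^n * (T^[n] y) j =
        (∏ i ∈ Finset.range n, m (res d (T^[i] y))) * y j +
        ∑ t ∈ Finset.range n, (∏ i ∈ Finset.Ico (t+1) n, m (res d (T^[i] y))) * (d:ℤ)^t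
          * r (res d (T^[t] y)) j := by
    intro n
    induction n with
    | zero => intro j; simp
    | succ n ih =>
      intro j
      have hstep := congrFun (hT (T^[n] y)) j
      simp only [Pi.smul_apply, Pi.add_apply, smul_eq_mul] at hstep
      rw [Function.iterate_succ_apply']
      have e1 : (d:ℤ)^(n+1) * T (T^[n] y) j
          = m (res d (T^[n] y)) * ((d:ℤ)^n * (T^[n] y) j)
            + (d:ℤ)^n * r (res d (T^[n] y)) j := by
        calc (d:ℤ)^(n+1) * T (T^[n] y) j = (d:ℤ)^n * ((d:ℤ) * T (T^[n] y) j) := by ring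
          _ = (d:ℤ)^n * (m (res d (T^[n] y)) * (T^[n] y) j + r (res d (T^[n] y)) j) := by
              rw [hstep]
          _ = _ := by ring
      rw [e1, ih j, Finset.prod_range_succ, Finset.sum_range_succ, mul_add, Finset.mul_sum]
      have e2 : ∀ t ∈ Finset.range n,
          m (res d (T^[n] y)) * ((∏ i ∈ Finset.Ico (t+1) n, m (res d (T^[i] y))) * (d:ℤ)^t
            * r (res d (T^[t] y)) j)
          = (∏ i ∈ Finset.Ico (t+1) (n+1), m (res d (T^[i] y))) * (d:ℤ)^t
            * r (res d (T^[t] y)) j := by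
        intro t ht
        rw [Finset.prod_Ico_succ_top (by simp at ht; omega : t+1 ≤ n)]
        ring
      rw [Finset.sum_congr rfl e2]
      simp only [Finset.Ico_self, Finset.prod_empty]
      ring
  -- set up notation
  set P : ℤ := ∏ i ∈ Finset.range k, m (res d (T^[i] x)) with hP
  have hPy : (∏ i ∈ Finset.range k, m (res d (T^[i] y))) = P := by
    exact Finset.prod_congr rfl (fun i hi => by rw [hω i (Finset.mem_range.mp hi)])
  have hPpos : 0 < P := Finset.prod_pos (fun i _ => hm _)
  -- vector form over ℝ
  have vec : ((d:ℝ)^k) • toE (T^[k] y)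
      = ((P:ℝ)) • toE y + ∑ t ∈ Finset.range k,
          (((∏ i ∈ Finset.Ico (t+1) k, m (res d (T^[i] y))) * (d:ℤ)^t : ℤ) : ℝ)
            • toE (r (res d (T^[t] y))) := by
    funext j
    rw [← hPy]
    have htraj := traj k j
    simp only [Pi.smul_apply, Pi.add_apply, Finset.sum_apply, smul_eq_mul, toE]
    exact_mod_cast htraj
  -- norm estimate
  have hdkR : (0:ℝ) < (d:ℝ)^k := by positivity
  have hMR : (0:ℝ) < (M:ℝ) - (d:ℝ) := by
    have : ((d:ℤ):ℝ) < (M:ℝ) := by exact_mod_cast hMd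
    push_cast at this ⊢
    linarith
  have hM0 : (0:ℤ) ≤ M := le_trans hd0.le hMd.le
  have coefbd : ∀ t ∈ Finset.range k,
      f ((((∏ i ∈ Finset.Ico (t+1) k, m (res d (T^[i] y))) * (d:ℤ)^t : ℤ) : ℝ)
          • toE (r (res d (T^[t] y))))
        ≤ (M:ℝ)^(k-1-t) * (d:ℝ)^t * R := by
    intro t ht
    rw [hf_smul]
    have hprodpos : (0:ℤ) < ∏ i ∈ Finset.Ico (t+1) k, m (res d (T^[i] y)) :=
      Finset.prod_pos (fun i _ => hm _)
    have hple : (∏ i ∈ Finset.Ico (t+1) k, m (res d (T^[i] y))) ≤ M^(k-1-t) := by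
      have h1 : (∏ i ∈ Finset.Ico (t+1) k, m (res d (T^[i] y)))
          ≤ ∏ _i ∈ Finset.Ico (t+1) k, M :=
        Finset.prod_le_prod (fun i _ => (hm _).le) (fun i _ => hM _)
      rw [Finset.prod_const] at h1
      have hcard : (Finset.Ico (t+1) k).card = k - 1 - t := by
        rw [Nat.card_Ico]; omega
      rwa [hcard] at h1
    have habs : |((((∏ i ∈ Finset.Ico (t+1) k, m (res d (T^[i] y))) * (d:ℤ)^t : ℤ)) : ℝ)|
        ≤ (M:ℝ)^(k-1-t) * (d:ℝ)^t := by
      rw [abs_of_nonneg (by positivity)]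
      have : ((∏ i ∈ Finset.Ico (t+1) k, m (res d (T^[i] y))) * (d:ℤ)^t : ℤ)
          ≤ M^(k-1-t) * (d:ℤ)^t := by
        apply mul_le_mul_of_nonneg_right hple (by positivity)
      exact_mod_cast this
    calc |((((∏ i ∈ Finset.Ico (t+1) k, m (res d (T^[i] y))) * (d:ℤ)^t : ℤ)) : ℝ)|
          * f (toE (r (res d (T^[t] y))))
        ≤ ((M:ℝ)^(k-1-t) * (d:ℝ)^t) * R := by
          apply mul_le_mul habs (hR _) (hf_nonneg _) (by positivity)
      _ = (M:ℝ)^(k-1-t) * (d:ℝ)^t * R := by ring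
  -- geometric sum identity
  have geom : (∑ t ∈ Finset.range k, (d:ℝ)^t * (M:ℝ)^(k-1-t)) * ((M:ℝ) - (d:ℝ))
      = (M:ℝ)^k - (d:ℝ)^k := by
    have := geom_sum₂_mul (d:ℝ) (M:ℝ) k
    have h2 : (∑ t ∈ Finset.range k, (d:ℝ)^t * (M:ℝ)^(k-1-t)) * ((d:ℝ) - (M:ℝ))
        = (d:ℝ)^k - (M:ℝ)^k := this
    nlinarith [h2]
  set S : ℝ := ∑ t ∈ Finset.range k, (d:ℝ)^t * (M:ℝ)^(k-1-t) with hS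
  -- main estimate
  have main : (d:ℝ)^k * f (toE (T^[k] y)) ≤ (P:ℝ) * f (toE y) + R * S := by
    have h1 : f (((d:ℝ)^k) • toE (T^[k] y)) = (d:ℝ)^k * f (toE (T^[k] y)) := by
      rw [hf_smul, abs_of_nonneg hdkR.le]
    rw [← h1, vec]
    calc f (((P:ℝ)) • toE y + ∑ t ∈ Finset.range k,
            (((∏ i ∈ Finset.Ico (t+1) k, m (res d (T^[i] y))) * (d:ℤ)^t : ℤ) : ℝ)
              • toE (r (res d (T^[t] y))))
        ≤ f (((P:ℝ)) • toE y) + f (∑ t ∈ Finset.range k,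
            (((∏ i ∈ Finset.Ico (t+1) k, m (res d (T^[i] y))) * (d:ℤ)^t : ℤ) : ℝ)
              • toE (r (res d (T^[t] y)))) := hf_add _ _
      _ ≤ (P:ℝ) * f (toE y) + ∑ t ∈ Finset.range k, (M:ℝ)^(k-1-t) * (d:ℝ)^t * R := by
          have h2 : f (((P:ℝ)) • toE y) = (P:ℝ) * f (toE y) := by
            rw [hf_smul, abs_of_nonneg (by exact_mod_cast hPpos.le)]
          have h3 := hf_sum (Finset.range k) (fun t =>
            (((∏ i ∈ Finset.Ico (t+1) k, m (res d (T^[i] y))) * (d:ℤ)^t : ℤ) : ℝ)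
              • toE (r (res d (T^[t] y))))
          have h4 := Finset.sum_le_sum coefbd
          linarith
      _ = (P:ℝ) * f (toE y) + R * S := by
          rw [hS, Finset.mul_sum]
          congr 1
          exact Finset.sum_congr rfl (fun t _ => by ring)
  -- final arithmetic
  set lam : ℝ := (((d:ℤ)^k - P : ℤ) : ℝ) with hlam
  have hlampos : (0:ℝ) < lam := by
    rw [hlam]
    have : (0:ℤ) < (d:ℤ)^k - P := by omega
    exact_mod_cast this
  have hy' : R * ((M:ℝ)^k - (d:ℝ)^k) < f (toE y) * (lam * ((M:ℝ) - (d:ℝ))) := by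
    rw [div_lt_iff₀ (by positivity)] at hy
    exact hy
  have hRS : R * S < f (toE y) * lam := by
    have h5 : R * S * ((M:ℝ) - (d:ℝ)) < f (toE y) * lam * ((M:ℝ) - (d:ℝ)) := by
      calc R * S * ((M:ℝ) - (d:ℝ)) = R * ((M:ℝ)^k - (d:ℝ)^k) := by rw [mul_assoc, geom]
        _ < f (toE y) * (lam * ((M:ℝ) - (d:ℝ))) := hy'
        _ = f (toE y) * lam * ((M:ℝ) - (d:ℝ)) := by ring
    exact lt_of_mul_lt_mul_right h5 hMR.le
  have hfinal : (d:ℝ)^k * f (toE (T^[k] y)) < (d:ℝ)^k * f (toE y) := by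
    have hdk : ((d:ℝ))^k = (P:ℝ) + lam := by
      rw [hlam]; push_cast; ring
    calc (d:ℝ)^k * f (toE (T^[k] y)) ≤ (P:ℝ) * f (toE y) + R * S := main
      _ < (P:ℝ) * f (toE y) + f (toE y) * lam := by linarith
      _ = (d:ℝ)^k * f (toE y) := by rw [hdk]; ring
  exact lt_of_mul_lt_mul_left hfinal hdkR.le
end

section
/- Let T : ℤ² → ℤ² be the generalized Collatz mapping of the example (d ≥ 2, b ≥ 1): T(x) = (m_{i,j} x + r_{i,j})/d for x ≡ (i,j) mod d. Then every point (x,y) ∈ ℤ² lying strictly between the lines y = bdx and x = 0 on either side — i.e., with x > 0 and y < bdx, or with x < 0 and y > bdx — has a divergent (not eventually periodic) T-trajectory. -/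
/-- The multipliers of the example. -/
def mEx (d i j : ℕ) : ℤ :=
  if i = 0 ∧ j = 0 then 1
  else if max i j < d - 1 then (d : ℤ) - 1
  else (d : ℤ) + 1

/-- The shift vectors of the example. -/
def rEx (d b i j : ℕ) : ℤ × ℤ :=
  if i = 0 ∧ j = 0 then (0, 0)
  else if max i j < d - 1 then ((i : ℤ), (j : ℤ) + (b : ℤ) * d * i)
  else if i = d - 1 then (1, ((b : ℤ) + 1) * d - j)
  else ((d : ℤ) - i, (b : ℤ) * d * ((d : ℤ) - i) + 1)

lemma coneEx (d b i j : ℕ) (hd : 2 ≤ d) (hi : i < d) (hj : j < d) :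
    1 ≤ mEx d i j ∧ IsCoprime (mEx d i j) (d : ℤ) ∧
    0 ≤ (rEx d b i j).1 ∧ (rEx d b i j).1 ≤ mEx d i j - 1 ∧
    0 ≤ (rEx d b i j).2 - (b : ℤ) * d * (rEx d b i j).1 ∧
    (rEx d b i j).2 - (b : ℤ) * d * (rEx d b i j).1 ≤ mEx d i j - 1 := by
  by_cases hA : i = 0 ∧ j = 0
  · simp only [mEx, rEx, if_pos hA]
    refine ⟨le_refl _, isCoprime_one_left, ?_, ?_, ?_, ?_⟩ <;> norm_num
  · by_cases hB : max i j < d - 1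
    · have hij : i < d - 1 ∧ j < d - 1 := by
        constructor <;> [exact lt_of_le_of_lt (le_max_left i j) hB;
          exact lt_of_le_of_lt (le_max_right i j) hB]
      simp only [mEx, rEx, if_neg hA, if_pos hB]
      refine ⟨by omega, ⟨-1, 1, by ring⟩, by positivity, ?_, ?_, ?_⟩
      · omega
      · ring_nf; positivity
      · have : ((j : ℤ) + (b : ℤ) * d * i) - (b : ℤ) * d * i = (j : ℤ) := by ring
        rw [this]; omega
    · by_cases hC : i = d - 1
      · simp only [mEx, rEx, if_neg hA, if_neg hB, if_pos hC]
        refine ⟨by omega, ⟨1, -1, by ring⟩, by norm_num, by omega, ?_, ?_⟩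
        · have : ((b : ℤ) + 1) * d - j - (b : ℤ) * d * 1 = (d : ℤ) - j := by ring
          rw [this]; omega
        · have : ((b : ℤ) + 1) * d - j - (b : ℤ) * d * 1 = (d : ℤ) - j := by ring
          rw [this]; omega
      · simp only [mEx, rEx, if_neg hA, if_neg hB, if_neg hC]
        refine ⟨by omega, ⟨1, -1, by ring⟩, by omega, by omega, ?_, ?_⟩
        · have : (b : ℤ) * d * ((d : ℤ) - i) + 1 - (b : ℤ) * d * ((d : ℤ) - i) = 1 := by ring
          rw [this]; omega
        · have : (b : ℤ) * d * ((d : ℤ) - i) + 1 - (b : ℤ) * d * ((d : ℤ) - i) = 1 := by ring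
          rw [this]; omega

lemma stepEx (d b : ℕ) (hd : 2 ≤ d)
    (T : ℤ × ℤ → ℤ × ℤ)
    (hT : ∀ (x y : ℤ) (i j : ℕ), i < d → j < d →
      x ≡ (i : ℤ) [ZMOD (d : ℤ)] → y ≡ (j : ℤ) [ZMOD (d : ℤ)] →
      (d : ℤ) • T (x, y) = mEx d i j • (x, y) + rEx d b i j) (x y : ℤ) :
    ∃ m rx ry : ℤ,
      (d : ℤ) * (T (x, y)).1 = m * x + rx ∧
      (d : ℤ) * (T (x, y)).2 = m * y + ry ∧
      1 ≤ m ∧ IsCoprime m (d : ℤ) ∧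
      0 ≤ rx ∧ rx ≤ m - 1 ∧
      0 ≤ ry - (b : ℤ) * d * rx ∧ ry - (b : ℤ) * d * rx ≤ m - 1 := by
  have hd0 : (0 : ℤ) < (d : ℤ) := by exact_mod_cast (by omega : 0 < d)
  set i : ℕ := (x % (d : ℤ)).toNat with hi
  set j : ℕ := (y % (d : ℤ)).toNat with hj
  have hxi : (i : ℤ) = x % (d : ℤ) := Int.toNat_of_nonneg (Int.emod_nonneg x hd0.ne')
  have hyj : (j : ℤ) = y % (d : ℤ) := Int.toNat_of_nonneg (Int.emod_nonneg y hd0.ne')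
  have hiltd : i < d := by
    have h := Int.emod_lt_of_pos x hd0
    have : (i : ℤ) < (d : ℤ) := hxi ▸ h
    exact_mod_cast this
  have hjltd : j < d := by
    have h := Int.emod_lt_of_pos y hd0
    have : (j : ℤ) < (d : ℤ) := hyj ▸ h
    exact_mod_cast this
  have hmx : x ≡ (i : ℤ) [ZMOD (d : ℤ)] := by
    show x % (d : ℤ) = (i : ℤ) % (d : ℤ)
    rw [hxi, Int.emod_emod_of_dvd _ dvd_rfl]
  have hmy : y ≡ (j : ℤ) [ZMOD (d : ℤ)] := by
    show y % (d : ℤ) = (j : ℤ) % (d : ℤ)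
    rw [hyj, Int.emod_emod_of_dvd _ dvd_rfl]
  have h := hT x y i j hiltd hjltd hmx hmy
  have h1 : (d : ℤ) * (T (x, y)).1 = mEx d i j * x + (rEx d b i j).1 := by
    have := congrArg Prod.fst h
    simpa [smul_eq_mul] using this
  have h2 : (d : ℤ) * (T (x, y)).2 = mEx d i j * y + (rEx d b i j).2 := by
    have := congrArg Prod.snd h
    simpa [smul_eq_mul] using this
  obtain ⟨c1, c2, c3, c4, c5, c6⟩ := coneEx d b i j hd hiltd hjltd
  exact ⟨mEx d i j, (rEx d b i j).1, (rEx d b i j).2, h1, h2, c1, c2, c3, c4, c5, c6⟩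

lemma auxPos {d A : ℤ} (hd : 0 < d) (h : 1 ≤ d * A) : 0 < A := by
  by_contra hc
  push_neg at hc
  have := mul_nonpos_of_nonneg_of_nonpos hd.le hc
  linarith

lemma auxNeg {d A : ℤ} (hd : 0 < d) (h : d * A ≤ -1) : A < 0 := by
  by_contra hc
  push_neg at hc
  have := mul_nonneg hd.le hc
  linarith

lemma auxSgn1 {a w v : ℤ} (h : a * w = v) (hw : 0 < w) (hv : 0 ≤ v) : 0 ≤ a := by
  by_contra hc
  push_neg at hc
  have := mul_neg_of_neg_of_pos hc hw
  linarith

lemma auxSgn2 {a w v : ℤ} (h : a * w = v) (hw : w < 0) (hv : 0 ≤ v) : a ≤ 0 := by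
  by_contra hc
  push_neg at hc
  have := mul_neg_of_pos_of_neg hc hw
  linarith

/-- for the generalized Collatz mapping `T` of the example
(`d ≥ 2`, `b ≥ 1`, `T(x) = (m_{i,j} x + r_{i,j})/d` for `x ≡ (i,j) mod d`),
every point `(x,y)` with `x > 0, y < bdx` or with `x < 0, y > bdx` has a
divergent (not eventually periodic) `T`-trajectory. -/
theorem example_divergent (d b : ℕ) (hd : 2 ≤ d) (hb : 1 ≤ b)
    (T : ℤ × ℤ → ℤ × ℤ)
    (hT : ∀ (x y : ℤ) (i j : ℕ), i < d → j < d →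
      x ≡ (i : ℤ) [ZMOD (d : ℤ)] → y ≡ (j : ℤ) [ZMOD (d : ℤ)] →
      (d : ℤ) • T (x, y) = mEx d i j • (x, y) + rEx d b i j) :
    ∀ x y : ℤ,
      ((0 < x ∧ y < (b : ℤ) * d * x) ∨ (x < 0 ∧ (b : ℤ) * d * x < y)) →
      ¬ ∃ N p : ℕ, 0 < p ∧ T^[N + p] (x, y) = T^[N] (x, y) := by
  have hd0 : (0 : ℤ) < (d : ℤ) := by exact_mod_cast (by omega : 0 < d)
  -- region predicate on a pair
  set Q : ℤ × ℤ → Prop := fun z =>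
    (0 < z.1 ∧ z.2 < (b : ℤ) * d * z.1) ∨ (z.1 < 0 ∧ (b : ℤ) * d * z.1 < z.2) with hQdef
  -- invariance
  have hInv : ∀ z : ℤ × ℤ, Q z → Q (T z) := by
    rintro ⟨zx, zy⟩ hz
    obtain ⟨m, rx, ry, h1, h2, hm, _, hrx0, hrx1, hry0, hry1⟩ := stepEx d b hd T hT zx zy
    simp only [hQdef] at hz ⊢
    have key : (d : ℤ) * ((T (zx, zy)).2 - (b : ℤ) * d * (T (zx, zy)).1)
        = m * (zy - (b : ℤ) * d * zx) + (ry - (b : ℤ) * d * rx) := by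
      linear_combination h2 - ((b : ℤ) * d) * h1
    have hm0 : (0 : ℤ) ≤ m := by linarith
    rcases hz with ⟨hx, hy⟩ | ⟨hx, hy⟩
    · left
      constructor
      · have hmz : m * 1 ≤ m * zx := mul_le_mul_of_nonneg_left (by linarith) hm0
        exact auxPos hd0 (by linarith)
      · have hL : zy - (b : ℤ) * d * zx ≤ -1 := by linarith
        have hmz : m * (zy - (b : ℤ) * d * zx) ≤ m * (-1) := mul_le_mul_of_nonneg_left hL hm0
        have h3 := auxNeg hd0 (show (d : ℤ) * ((T (zx, zy)).2 - (b : ℤ) * d * (T (zx, zy)).1) ≤ -1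
          by rw [key]; linarith)
        linarith
    · right
      constructor
      · have hmz : m * zx ≤ m * (-1) := mul_le_mul_of_nonneg_left (by linarith) hm0
        exact auxNeg hd0 (by linarith)
      · have hL : 1 ≤ zy - (b : ℤ) * d * zx := by linarith
        have hmz : m * 1 ≤ m * (zy - (b : ℤ) * d * zx) := mul_le_mul_of_nonneg_left hL hm0
        have h3 := auxPos hd0 (show 1 ≤ (d : ℤ) * ((T (zx, zy)).2 - (b : ℤ) * d * (T (zx, zy)).1)
          by rw [key]; linarith)
        linarith
  -- iteration
  have hIter : ∀ (z : ℤ × ℤ) (n : ℕ), ∃ M vx vy : ℤ,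
      (d : ℤ) ^ n * (T^[n] z).1 = M * z.1 + vx ∧
      (d : ℤ) ^ n * (T^[n] z).2 = M * z.2 + vy ∧
      1 ≤ M ∧ IsCoprime M (d : ℤ) ∧ 0 ≤ vx ∧ 0 ≤ vy - (b : ℤ) * d * vx := by
    intro z n
    induction n with
    | zero => exact ⟨1, 0, 0, by simp, by simp, le_refl _, isCoprime_one_left, le_refl _, by simp⟩
    | succ n ih =>
      obtain ⟨M, vx, vy, e1, e2, hM, hMc, hvx, hvy⟩ := ih
      set w := T^[n] z with hw
      obtain ⟨m, rx, ry, h1, h2, hm, hmc, hrx0, hrx1, hry0, hry1⟩ := stepEx d b hd T hT w.1 w.2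
      have hww : (w.1, w.2) = w := rfl
      rw [hww] at h1 h2
      refine ⟨m * M, m * vx + (d : ℤ) ^ n * rx, m * vy + (d : ℤ) ^ n * ry, ?_, ?_, ?_,
        hmc.mul_left hMc, ?_, ?_⟩
      · rw [Function.iterate_succ_apply', ← hw]
        calc (d : ℤ) ^ (n + 1) * (T w).1 = (d : ℤ) ^ n * ((d : ℤ) * (T w).1) := by ring
        _ = (d : ℤ) ^ n * (m * w.1 + rx) := by rw [h1]
        _ = m * ((d : ℤ) ^ n * w.1) + (d : ℤ) ^ n * rx := by ring
        _ = m * (M * z.1 + vx) + (d : ℤ) ^ n * rx := by rw [e1]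
        _ = m * M * z.1 + (m * vx + (d : ℤ) ^ n * rx) := by ring
      · rw [Function.iterate_succ_apply', ← hw]
        calc (d : ℤ) ^ (n + 1) * (T w).2 = (d : ℤ) ^ n * ((d : ℤ) * (T w).2) := by ring
        _ = (d : ℤ) ^ n * (m * w.2 + ry) := by rw [h2]
        _ = m * ((d : ℤ) ^ n * w.2) + (d : ℤ) ^ n * ry := by ring
        _ = m * (M * z.2 + vy) + (d : ℤ) ^ n * ry := by rw [e2]
        _ = m * M * z.2 + (m * vy + (d : ℤ) ^ n * ry) := by ring
      · nlinarith
      · positivity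
      · have hdn : (0 : ℤ) ≤ (d : ℤ) ^ n := by positivity
        have : m * vy + (d : ℤ) ^ n * ry - (b : ℤ) * d * (m * vx + (d : ℤ) ^ n * rx)
            = m * (vy - (b : ℤ) * d * vx) + (d : ℤ) ^ n * (ry - (b : ℤ) * d * rx) := by ring
        rw [this]
        have h1' : 0 ≤ m * (vy - (b : ℤ) * d * vx) := by positivity
        have h2' : 0 ≤ (d : ℤ) ^ n * (ry - (b : ℤ) * d * rx) := by positivity
        linarith
  intro x y hQ0 ⟨N, p, hp, hcyc⟩
  -- Q holds along the whole orbit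
  have hQn : ∀ n, Q (T^[n] (x, y)) := by
    intro n
    induction n with
    | zero => simpa [hQdef] using hQ0
    | succ n ih => rw [Function.iterate_succ_apply']; exact hInv _ ih
  set w := T^[N] (x, y) with hw
  have hper : T^[p] w = w := by
    rw [hw, ← Function.iterate_add_apply, Nat.add_comm p N, hcyc]
  obtain ⟨M, vx, vy, e1, e2, hM, hMc, hvx, hvy⟩ := hIter w p
  rw [hper] at e1 e2
  have hQw : Q w := hQn N
  -- derive M = d ^ p
  have hMdp : M = (d : ℤ) ^ p := by
    have key1 : ((d : ℤ) ^ p - M) * w.1 = vx := by linear_combination e1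
    have key2 : ((d : ℤ) ^ p - M) * (w.2 - (b : ℤ) * d * w.1) = vy - (b : ℤ) * d * vx := by
      linear_combination e2 - ((b : ℤ) * d) * e1
    simp only [hQdef] at hQw
    rcases hQw with ⟨hx, hy⟩ | ⟨hx, hy⟩
    · have hL : w.2 - (b : ℤ) * d * w.1 < 0 := by linarith
      have hle := auxSgn1 key1 hx hvx
      have hge := auxSgn2 key2 hL hvy
      linarith
    · have hL : 0 < w.2 - (b : ℤ) * d * w.1 := by linarith
      have hle := auxSgn1 key2 hL hvy
      have hge := auxSgn2 key1 hx hvx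
      linarith
  -- contradiction with coprimality
  rw [hMdp] at hMc
  obtain ⟨u, v, huv⟩ := hMc
  have hdvd : (d : ℤ) ∣ 1 := by
    have h1 : (d : ℤ) ∣ (d : ℤ) ^ p := dvd_pow_self _ (by omega)
    calc (d : ℤ) ∣ u * (d : ℤ) ^ p + v * (d : ℤ) :=
      dvd_add (h1.mul_left u) (dvd_mul_left _ _)
    _ = 1 := huv
  have := Int.le_of_dvd one_pos hdvd
  omega
end
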